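/- Let p : {0,1}³ → ℝ, written p_{abc}, and for (i,j,k) ∈ {0,1}³ define the Fourier coordinates q_{ijk} = ∑_{a,b,c ∈ {0,1}} (−1)^{i·a + j·b + k·c} p_{abc}. Then the following are equivalent. (i) There exist real numbers π₀, π₁, α₁, β₁, α₂, β₂, α₃, β₃, all nonnegative, with π₀ + π₁ = 1, α_i + β_i = 1 for i = 1,2,3, π₀ > π₁, α_i > β_i for i = 1,2,3, and p_{abc} = π₀·x₁(a)·x₂(b)·x₃(c) + π₁·y₁(a)·y₂(b)·y₃(c) for all a,b,c, where x_i(0) = α_i, x_i(1) = β_i, y_i(0) = β_i, y_i(1) = α_i. (ii) q_{000} = 1; q_{ijk} > 0 for every (i,j,k) ≠ (0,0,0); q_{001}·q_{110} = q_{000}·q_{111}, q_{010}·q_{101} = q_{000}·q_{111} and q_{100}·q_{011} = q_{000}·q_{111}; and q_{000}·q_{110} ≥ q_{100}·q_{010}, q_{000}·q_{011} ≥ q_{110}·q_{101}, q_{000}·q_{001} ≥ q_{011}·q_{010}, q_{000}·q_{100} ≥ q_{001}·q_{101}. -/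

import Mathlib

set_option maxHeartbeats 1000000

private lemma sqrt_mul_sqrt_eq' {x y z : ℝ} (hx : 0 ≤ x) (hz : 0 ≤ z)
    (h : x * y = z ^ 2) : Real.sqrt x * Real.sqrt y = z := by
  rw [← Real.sqrt_mul hx, h, Real.sqrt_sq hz]

/-- The semialgebraic description of the CFN model on the tripod tree `K_{1,3}`
(Example 3.1 of the paper). -/
theorem cfn_tripod_semialgebraic_description
    (p : Fin 2 → Fin 2 → Fin 2 → ℝ) (q : Fin 2 → Fin 2 → Fin 2 → ℝ)
    (hq : ∀ i j k : Fin 2, q i j k =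
      ∑ a : Fin 2, ∑ b : Fin 2, ∑ c : Fin 2,
        (-1 : ℝ) ^ (i.val * a.val + j.val * b.val + k.val * c.val) * p a b c) :
    (∃ π₀ π₁ α₁ β₁ α₂ β₂ α₃ β₃ : ℝ,
      0 ≤ π₀ ∧ 0 ≤ π₁ ∧ 0 ≤ α₁ ∧ 0 ≤ β₁ ∧ 0 ≤ α₂ ∧ 0 ≤ β₂ ∧ 0 ≤ α₃ ∧ 0 ≤ β₃ ∧
      π₀ + π₁ = 1 ∧ α₁ + β₁ = 1 ∧ α₂ + β₂ = 1 ∧ α₃ + β₃ = 1 ∧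
      π₁ < π₀ ∧ β₁ < α₁ ∧ β₂ < α₂ ∧ β₃ < α₃ ∧
      ∀ a b c : Fin 2, p a b c =
        π₀ * (if a = 0 then α₁ else β₁) * (if b = 0 then α₂ else β₂) *
          (if c = 0 then α₃ else β₃) +
        π₁ * (if a = 0 then β₁ else α₁) * (if b = 0 then β₂ else α₂) *
          (if c = 0 then β₃ else α₃))
    ↔
    (q 0 0 0 = 1 ∧
      (∀ i j k : Fin 2, ¬(i = 0 ∧ j = 0 ∧ k = 0) → 0 < q i j k) ∧
      q 0 0 1 * q 1 1 0 = q 0 0 0 * q 1 1 1 ∧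
      q 0 1 0 * q 1 0 1 = q 0 0 0 * q 1 1 1 ∧
      q 1 0 0 * q 0 1 1 = q 0 0 0 * q 1 1 1 ∧
      q 1 0 0 * q 0 1 0 ≤ q 0 0 0 * q 1 1 0 ∧
      q 1 1 0 * q 1 0 1 ≤ q 0 0 0 * q 0 1 1 ∧
      q 0 1 1 * q 0 1 0 ≤ q 0 0 0 * q 0 0 1 ∧
      q 0 0 1 * q 1 0 1 ≤ q 0 0 0 * q 1 0 0) := by
  have e000 := hq 0 0 0
  have e100 := hq 1 0 0
  have e010 := hq 0 1 0
  have e001 := hq 0 0 1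
  have e110 := hq 1 1 0
  have e101 := hq 1 0 1
  have e011 := hq 0 1 1
  have e111 := hq 1 1 1
  simp only [Fin.sum_univ_two, Fin.val_zero, Fin.val_one] at e000 e100 e010 e001 e110 e101 e011 e111
  norm_num at e000 e100 e010 e001 e110 e101 e011 e111
  constructor
  · rintro ⟨π₀, π₁, α₁, β₁, α₂, β₂, α₃, β₃, hπ₀, hπ₁, hα₁, hβ₁, hα₂, hβ₂, hα₃, hβ₃,
      hπ, h1, h2, h3, hsπ, hd1, hd2, hd3, hp⟩
    have v000 : q 0 0 0 = 1 := by
      rw [e000]; simp only [hp]; norm_num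
      linear_combination (α₁+β₁)*(α₂+β₂)*(α₃+β₃)*hπ + (α₂+β₂)*(α₃+β₃)*h1 + (α₃+β₃)*h2 + h3
    have v100 : q 1 0 0 = (π₀ - π₁) * (α₁ - β₁) := by
      rw [e100]; simp only [hp]; norm_num
      linear_combination (π₀-π₁)*(α₁-β₁)*((α₃+β₃)*h2 + h3)
    have v010 : q 0 1 0 = (π₀ - π₁) * (α₂ - β₂) := by
      rw [e010]; simp only [hp]; norm_num
      linear_combination (π₀-π₁)*(α₂-β₂)*((α₃+β₃)*h1 + h3)
    have v001 : q 0 0 1 = (π₀ - π₁) * (α₃ - β₃) := by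
      rw [e001]; simp only [hp]; norm_num
      linear_combination (π₀-π₁)*(α₃-β₃)*((α₂+β₂)*h1 + h2)
    have v110 : q 1 1 0 = (α₁ - β₁) * (α₂ - β₂) := by
      rw [e110]; simp only [hp]; norm_num
      linear_combination (α₁-β₁)*(α₂-β₂)*((α₃+β₃)*hπ + h3)
    have v101 : q 1 0 1 = (α₁ - β₁) * (α₃ - β₃) := by
      rw [e101]; simp only [hp]; norm_num
      linear_combination (α₁-β₁)*(α₃-β₃)*((α₂+β₂)*hπ + h2)
    have v011 : q 0 1 1 = (α₂ - β₂) * (α₃ - β₃) := by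
      rw [e011]; simp only [hp]; norm_num
      linear_combination (α₂-β₂)*(α₃-β₃)*((α₁+β₁)*hπ + h1)
    have v111 : q 1 1 1 = (π₀ - π₁) * (α₁ - β₁) * (α₂ - β₂) * (α₃ - β₃) := by
      rw [e111]; simp only [hp]; norm_num; ring
    have hs : 0 < π₀ - π₁ := by linarith
    have hs1 : π₀ - π₁ ≤ 1 := by linarith
    have hD1 : 0 < α₁ - β₁ := by linarith
    have hD1' : α₁ - β₁ ≤ 1 := by linarith
    have hD2 : 0 < α₂ - β₂ := by linarith
    have hD2' : α₂ - β₂ ≤ 1 := by linarith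
    have hD3 : 0 < α₃ - β₃ := by linarith
    have hD3' : α₃ - β₃ ≤ 1 := by linarith
    clear e000 e100 e010 e001 e110 e101 e011 e111 hq hp
    refine ⟨v000, ?_, by rw [v001, v110, v000, v111]; ring,
      by rw [v010, v101, v000, v111]; ring,
      by rw [v100, v011, v000, v111]; ring, ?_, ?_, ?_, ?_⟩
    · intro i j k h
      fin_cases i <;> fin_cases j <;> fin_cases k <;> simp only [Fin.mk_one, Fin.zero_eta] at h ⊢
      · exact absurd ⟨trivial, trivial, trivial⟩ h
      · rw [v001]; exact mul_pos hs hD3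
      · rw [v010]; exact mul_pos hs hD2
      · rw [v011]; exact mul_pos hD2 hD3
      · rw [v100]; exact mul_pos hs hD1
      · rw [v101]; exact mul_pos hD1 hD3
      · rw [v110]; exact mul_pos hD1 hD2
      · rw [v111]; exact mul_pos (mul_pos (mul_pos hs hD1) hD2) hD3
    · rw [v100, v010, v000, v110]
      calc (π₀-π₁)*(α₁-β₁) * ((π₀-π₁)*(α₂-β₂)) = ((π₀-π₁)*(π₀-π₁)) * ((α₁-β₁)*(α₂-β₂)) := by
            ring
        _ ≤ 1 * ((α₁-β₁)*(α₂-β₂)) :=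
            mul_le_mul_of_nonneg_right (mul_le_one₀ hs1 hs.le hs1) (mul_nonneg hD1.le hD2.le)
    · rw [v110, v101, v000, v011]
      calc (α₁-β₁)*(α₂-β₂) * ((α₁-β₁)*(α₃-β₃)) = ((α₁-β₁)*(α₁-β₁)) * ((α₂-β₂)*(α₃-β₃)) := by
            ring
        _ ≤ 1 * ((α₂-β₂)*(α₃-β₃)) :=
            mul_le_mul_of_nonneg_right (mul_le_one₀ hD1' hD1.le hD1') (mul_nonneg hD2.le hD3.le)
    · rw [v011, v010, v000, v001]
      calc (α₂-β₂)*(α₃-β₃) * ((π₀-π₁)*(α₂-β₂)) = ((α₂-β₂)*(α₂-β₂)) * ((π₀-π₁)*(α₃-β₃)) := by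
            ring
        _ ≤ 1 * ((π₀-π₁)*(α₃-β₃)) :=
            mul_le_mul_of_nonneg_right (mul_le_one₀ hD2' hD2.le hD2') (mul_nonneg hs.le hD3.le)
    · rw [v001, v101, v000, v100]
      calc (π₀-π₁)*(α₃-β₃) * ((α₁-β₁)*(α₃-β₃)) = ((α₃-β₃)*(α₃-β₃)) * ((π₀-π₁)*(α₁-β₁)) := by
            ring
        _ ≤ 1 * ((π₀-π₁)*(α₁-β₁)) :=
            mul_le_mul_of_nonneg_right (mul_le_one₀ hD3' hD3.le hD3') (mul_nonneg hs.le hD1.le)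
  · rintro ⟨c1, hpos, hCD, hBE, hAF, i1, i2, i3, i4⟩
    rw [c1, one_mul] at hCD hBE hAF i1 i2 i3 i4
    have PA : 0 < q 1 0 0 := hpos 1 0 0 (by decide)
    have PB : 0 < q 0 1 0 := hpos 0 1 0 (by decide)
    have PC : 0 < q 0 0 1 := hpos 0 0 1 (by decide)
    have PD : 0 < q 1 1 0 := hpos 1 1 0 (by decide)
    have PE : 0 < q 1 0 1 := hpos 1 0 1 (by decide)
    have PF : 0 < q 0 1 1 := hpos 0 1 1 (by decide)
    have PG : 0 < q 1 1 1 := hpos 1 1 1 (by decide)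
    set A := q 1 0 0 with hA'
    set B := q 0 1 0 with hB'
    set C := q 0 0 1 with hC'
    set D := q 1 1 0 with hD'
    set E := q 1 0 1 with hE'
    set F := q 0 1 1 with hF'
    set G := q 1 1 1 with hG'
    set s := Real.sqrt (A * B / D) with hs'
    set d1 := Real.sqrt (D * E / F) with hd1'
    set d2 := Real.sqrt (D * F / E) with hd2'
    set d3 := Real.sqrt (E * F / D) with hd3'
    have hs0 : 0 < s := Real.sqrt_pos.mpr (by positivity)
    have hd10 : 0 < d1 := Real.sqrt_pos.mpr (by positivity)
    have hd20 : 0 < d2 := Real.sqrt_pos.mpr (by positivity)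
    have hd30 : 0 < d3 := Real.sqrt_pos.mpr (by positivity)
    -- product identities
    have vD : d1 * d2 = D := sqrt_mul_sqrt_eq' (by positivity) PD.le
      (by field_simp)
    have vE : d1 * d3 = E := sqrt_mul_sqrt_eq' (by positivity) PE.le
      (by field_simp)
    have vF : d2 * d3 = F := sqrt_mul_sqrt_eq' (by positivity) PF.le
      (by field_simp)
    have vA : s * d1 = A := sqrt_mul_sqrt_eq' (by positivity) PA.le
      (by field_simp; linear_combination hBE - hAF)
    have vB : s * d2 = B := sqrt_mul_sqrt_eq' (by positivity) PB.le
      (by field_simp; linear_combination hAF - hBE)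
    have vC : s * d3 = C := sqrt_mul_sqrt_eq' (by positivity) PC.le
      (by field_simp; linear_combination (B*E)*hAF + G*hBE - (C*D + G)*hCD)
    have vG : s * (d1 * (d2 * d3)) = G := by
      rw [vF]; rw [show s * (d1 * F) = (s*d1)*F by ring, vA, hAF]
    -- bounds
    have hs1 : s ≤ 1 := by
      rw [hs', show (1:ℝ) = Real.sqrt 1 by simp]
      exact Real.sqrt_le_sqrt (by rw [div_le_one PD]; exact i1)
    have hd11 : d1 ≤ 1 := by
      rw [hd1', show (1:ℝ) = Real.sqrt 1 by simp]
      exact Real.sqrt_le_sqrt (by rw [div_le_one PF]; exact i2)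
    have hDF_E : D * F ≤ E := by
      have h2 : D * F * B ≤ E * B := by
        calc D * F * B = D * (F * B) := by ring
          _ ≤ D * C := mul_le_mul_of_nonneg_left i3 PD.le
          _ = E * B := by linear_combination hCD - hBE
      exact le_of_mul_le_mul_right h2 PB
    have hEF_D : E * F ≤ D := by
      have h2 : E * F * A ≤ D * A := by
        calc E * F * A = D * (C * E) := by linear_combination E*hAF - E*hCD
          _ ≤ D * A := mul_le_mul_of_nonneg_left i4 PD.le
      exact le_of_mul_le_mul_right h2 PA
    have hd21 : d2 ≤ 1 := by
      rw [hd2', show (1:ℝ) = Real.sqrt 1 by simp]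
      exact Real.sqrt_le_sqrt (by rw [div_le_one PE]; exact hDF_E)
    have hd31 : d3 ≤ 1 := by
      rw [hd3', show (1:ℝ) = Real.sqrt 1 by simp]
      exact Real.sqrt_le_sqrt (by rw [div_le_one PD]; exact hEF_D)
    refine ⟨(1+s)/2, (1-s)/2, (1+d1)/2, (1-d1)/2, (1+d2)/2, (1-d2)/2, (1+d3)/2, (1-d3)/2,
      by linarith, by linarith, by linarith, by linarith, by linarith, by linarith,
      by linarith, by linarith, by ring, by ring, by ring, by ring,
      by linarith, by linarith, by linarith, by linarith, ?_⟩
    have hA : A = s * d1 := vA.symm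
    have hB : B = s * d2 := vB.symm
    have hC : C = s * d3 := vC.symm
    have hDe : D = d1 * d2 := vD.symm
    have hEe : E = d1 * d3 := vE.symm
    have hFe : F = d2 * d3 := vF.symm
    have hGe : G = s * (d1 * (d2 * d3)) := vG.symm
    intro a b c
    fin_cases a <;> fin_cases b <;> fin_cases c <;> norm_num
    · linear_combination ((e000 - c1) + (e100 - hA) + (e010 - hB) + (e001 - hC)
        + (e110 - hDe) + (e101 - hEe) + (e011 - hFe) + (e111 - hGe))/(-8)
    · linear_combination ((e000 - c1) + (e100 - hA) + (e010 - hB) - (e001 - hC)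
        + (e110 - hDe) - (e101 - hEe) - (e011 - hFe) - (e111 - hGe))/(-8)
    · linear_combination ((e000 - c1) + (e100 - hA) - (e010 - hB) + (e001 - hC)
        - (e110 - hDe) + (e101 - hEe) - (e011 - hFe) - (e111 - hGe))/(-8)
    · linear_combination ((e000 - c1) + (e100 - hA) - (e010 - hB) - (e001 - hC)
        - (e110 - hDe) - (e101 - hEe) + (e011 - hFe) + (e111 - hGe))/(-8)
    · linear_combination ((e000 - c1) - (e100 - hA) + (e010 - hB) + (e001 - hC)
        - (e110 - hDe) - (e101 - hEe) + (e011 - hFe) - (e111 - hGe))/(-8)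
    · linear_combination ((e000 - c1) - (e100 - hA) + (e010 - hB) - (e001 - hC)
        - (e110 - hDe) + (e101 - hEe) - (e011 - hFe) + (e111 - hGe))/(-8)
    · linear_combination ((e000 - c1) - (e100 - hA) - (e010 - hB) + (e001 - hC)
        + (e110 - hDe) - (e101 - hEe) - (e011 - hFe) + (e111 - hGe))/(-8)
    · linear_combination ((e000 - c1) - (e100 - hA) - (e010 - hB) - (e001 - hC)
        + (e110 - hDe) + (e101 - hEe) + (e011 - hFe) - (e111 - hGe))/(-8)
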